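/- The path P_4 with 4 edges does not divide the 3-dimensional hypercube Q_3. -/

import Mathlib

open SimpleGraph

/-- `H` divides `G`: the edge set of `G` can be partitioned into edge sets of
subgraphs of `G`, each isomorphic to `H`. -/
def GraphDivides {α β : Type} (H : SimpleGraph α) (G : SimpleGraph β) : Prop :=
  ∃ (ι : Type) (f : ι → G.Subgraph),
    (∀ i, Nonempty (H ≃g (f i).coe)) ∧
    ∀ e ∈ G.edgeSet, ∃! i, e ∈ (f i).edgeSet

/-- The `n`-dimensional hypercube graph. -/
def cube (n : ℕ) : SimpleGraph (Fin n → ZMod 2) where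
  Adj x y := hammingDist x y = 1
  symm := ⟨fun x y h => by show hammingDist y x = 1; rw [hammingDist_comm]; exact h⟩
  loopless := ⟨fun x h => by simp [hammingDist_self] at h⟩

instance pg5adj : DecidableRel (pathGraph 5).Adj := fun _ _ =>
  decidable_of_iff _ pathGraph_adj.symm

instance cb3adj : DecidableRel (cube 3).Adj := fun x y => by
  unfold cube; infer_instance

lemma P1 : ∑ v : Fin 5, (pathGraph 5).degree v = 8 := by decide
lemma P2 : ∀ v : Fin 5, (pathGraph 5).degree v ≤ 2 := by decide
lemma P3 : (Finset.univ.filter (fun v : Fin 5 => (pathGraph 5).degree v = 1)).card = 2 := by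
  decide
lemma C3 : ∀ v, (cube 3).degree v = 3 := by decide
lemma CV : Fintype.card (Fin 3 → ZMod 2) = 8 := by simp

theorem path4_not_divides_cube3 : ¬ GraphDivides (pathGraph 5) (cube 3) := by
  classical
  rintro ⟨ι, f, hiso, huniq⟩
  -- every part has an edge, so ι injects into edges ⇒ finite
  have hedge : ∀ i : ι, ∃ e ∈ (cube 3).edgeSet, e ∈ (f i).edgeSet := by
    intro i
    obtain ⟨e⟩ := hiso i
    have h01 : (pathGraph 5).Adj 0 1 := by decide
    have hadj : (f i).Adj ((e 0 : (f i).verts) : _) ((e 1 : (f i).verts) : _) := by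
      have := e.map_adj_iff.2 h01
      rwa [Subgraph.coe_adj] at this
    exact ⟨s(((e 0 : (f i).verts) : _), ((e 1 : (f i).verts) : _)),
      (cube 3).mem_edgeSet.2 hadj.adj_sub, Subgraph.mem_edgeSet.2 hadj⟩
  choose g hg1 hg2 using hedge
  have ginj : Function.Injective g := by
    intro i j hij
    obtain ⟨k, _, hk⟩ := huniq (g i) (hg1 i)
    rw [hk i (hg2 i), hk j (hij ▸ hg2 j)]
  haveI : Finite ι := Finite.of_injective g ginj
  haveI : Fintype ι := Fintype.ofFinite ι
  set D : ι → (Fin 3 → ZMod 2) → ℕ := fun i v => ((f i).neighborSet v).toFinset.card with hDdef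
  have main : ∀ i : ι, (∀ v, D i v ≤ 2) ∧ (∑ v, D i v = 8) ∧
      (Finset.univ.filter (fun v => D i v = 1)).card = 2 := by
    intro i
    obtain ⟨e⟩ := hiso i
    have embinj : Function.Injective (fun w : Fin 5 => ((e w : (f i).verts) : Fin 3 → ZMod 2)) := by
      intro a b h
      exact e.toEquiv.injective (Subtype.ext h)
    set emb : Fin 5 ↪ (Fin 3 → ZMod 2) :=
      ⟨fun w => ((e w : (f i).verts) : Fin 3 → ZMod 2), embinj⟩ with hembdef
    have hD : ∀ w : Fin 5, D i (emb w) = (pathGraph 5).degree w := by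
      intro w
      calc D i (emb w) = Fintype.card ((f i).neighborSet (emb w)) := Set.toFinset_card _
        _ = Nat.card ((f i).neighborSet (emb w)) := (Nat.card_eq_fintype_card).symm
        _ = Nat.card ((f i).coe.neighborSet (e w)) :=
            (Nat.card_congr ((f i).coeNeighborSetEquiv (e w))).symm
        _ = Nat.card ((pathGraph 5).neighborSet w) :=
            (Nat.card_congr (e.mapNeighborSet w)).symm
        _ = Fintype.card ((pathGraph 5).neighborSet w) := Nat.card_eq_fintype_card
        _ = (pathGraph 5).degree w := card_neighborSet_eq_degree _ _
    have hmem : ∀ v, v ∈ (f i).verts → v ∈ Finset.univ.map emb := by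
      intro v hv
      refine Finset.mem_map.2 ⟨e.symm ⟨v, hv⟩, Finset.mem_univ _, ?_⟩
      show ((e (e.symm ⟨v, hv⟩) : (f i).verts) : Fin 3 → ZMod 2) = v
      have : e (e.symm ⟨v, hv⟩) = ⟨v, hv⟩ := e.toEquiv.apply_symm_apply ⟨v, hv⟩
      rw [this]
    have hD0 : ∀ v, v ∉ Finset.univ.map emb → D i v = 0 := by
      intro v hv
      have hne : (f i).neighborSet v = ∅ := by
        ext w
        simp only [Subgraph.mem_neighborSet, Set.mem_empty_iff_false, iff_false]
        intro hadj
        exact hv (hmem v hadj.fst_mem)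
      simp [hDdef, hne]
    refine ⟨?_, ?_, ?_⟩
    · intro v
      by_cases hv : v ∈ Finset.univ.map emb
      · obtain ⟨w, _, rfl⟩ := Finset.mem_map.1 hv
        rw [hD w]; exact P2 w
      · rw [hD0 v hv]; omega
    · rw [← Finset.sum_subset (Finset.subset_univ (Finset.univ.map emb))
        (fun v _ hv => hD0 v hv), Finset.sum_map]
      simp only [hD]
      exact P1
    · have heq : Finset.univ.filter (fun v => D i v = 1) =
          (Finset.univ.filter (fun w : Fin 5 => (pathGraph 5).degree w = 1)).map emb := by
        ext v
        simp only [Finset.mem_filter, Finset.mem_univ, true_and, Finset.mem_map]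
        constructor
        · intro hv
          by_cases h : v ∈ Finset.univ.map emb
          · obtain ⟨w, _, rfl⟩ := Finset.mem_map.1 h
            exact ⟨w, (hD w).symm.trans hv, rfl⟩
          · rw [hD0 v h] at hv; exact absurd hv (by omega)
        · rintro ⟨w, hw, rfl⟩
          rw [hD w]; exact hw
      rw [heq, Finset.card_map]
      exact P3
  have hstep3 : ∀ v, (3 : ℕ) = ∑ i, D i v := by
    intro v
    have h1 : (cube 3).neighborFinset v =
        Finset.univ.biUnion (fun i => ((f i).neighborSet v).toFinset) := by
      ext w
      simp only [mem_neighborFinset, Finset.mem_biUnion, Set.mem_toFinset,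
        Subgraph.mem_neighborSet]
      constructor
      · intro h
        obtain ⟨j, hj, _⟩ := huniq s(v, w) ((cube 3).mem_edgeSet.2 h)
        exact ⟨j, Finset.mem_univ j, Subgraph.mem_edgeSet.1 hj⟩
      · rintro ⟨j, -, hj⟩
        exact hj.adj_sub
    have hdisj : ∀ i ∈ (Finset.univ : Finset ι), ∀ j ∈ (Finset.univ : Finset ι), i ≠ j →
        Disjoint ((f i).neighborSet v).toFinset ((f j).neighborSet v).toFinset := by
      intro i _ j _ hij
      rw [Finset.disjoint_left]
      intro w hwi hwj
      rw [Set.mem_toFinset, Subgraph.mem_neighborSet] at hwi hwj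
      obtain ⟨k, _, hk⟩ := huniq s(v, w) ((cube 3).mem_edgeSet.2 hwi.adj_sub)
      exact hij ((hk i (Subgraph.mem_edgeSet.2 hwi)).trans
        (hk j (Subgraph.mem_edgeSet.2 hwj)).symm)
    calc (3 : ℕ) = (cube 3).degree v := (C3 v).symm
      _ = ((cube 3).neighborFinset v).card := rfl
      _ = ∑ i, ((f i).neighborSet v).toFinset.card := by rw [h1, Finset.card_biUnion hdisj]
      _ = ∑ i, D i v := rfl
  have hcard : Fintype.card ι = 3 := by
    have h24 : ∑ v : Fin 3 → ZMod 2, ∑ i, D i v = 24 := by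
      rw [← Finset.sum_congr rfl (fun v _ => hstep3 v)]
      rw [Finset.sum_const, Finset.card_univ, CV, smul_eq_mul]
    rw [Finset.sum_comm] at h24
    have heq : ∑ i : ι, ∑ v, D i v = ∑ i : ι, 8 :=
      Finset.sum_congr rfl (fun i _ => (main i).2.1)
    rw [heq, Finset.sum_const, Finset.card_univ, smul_eq_mul] at h24
    omega
  have hend : ∀ v, ∃ i, D i v = 1 := by
    intro v
    by_contra h
    push_neg at h
    have heven : ∀ i ∈ (Finset.univ : Finset ι), 2 ∣ D i v := by
      intro i _
      have h2 := (main i).1 v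
      have h1 := h i
      omega
    have hdvd : 2 ∣ ∑ i, D i v := Finset.dvd_sum heven
    rw [← hstep3 v] at hdvd
    omega
  have hsub : (Finset.univ : Finset (Fin 3 → ZMod 2)) ⊆
      Finset.univ.biUnion (fun i : ι => Finset.univ.filter (fun v => D i v = 1)) := by
    intro v _
    obtain ⟨i, hi⟩ := hend v
    exact Finset.mem_biUnion.2 ⟨i, Finset.mem_univ i, Finset.mem_filter.2 ⟨Finset.mem_univ v, hi⟩⟩
  have h8 : (8 : ℕ) ≤ 6 := by
    calc (8 : ℕ) = (Finset.univ : Finset (Fin 3 → ZMod 2)).card := by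
          rw [Finset.card_univ, CV]
      _ ≤ (Finset.univ.biUnion (fun i : ι => Finset.univ.filter (fun v => D i v = 1))).card :=
          Finset.card_le_card hsub
      _ ≤ ∑ i : ι, (Finset.univ.filter (fun v => D i v = 1)).card := Finset.card_biUnion_le
      _ = ∑ i : ι, 2 := Finset.sum_congr rfl (fun i _ => (main i).2.2)
      _ = 6 := by rw [Finset.sum_const, Finset.card_univ, hcard, smul_eq_mul]
  omega
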